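/- For integers $k \ge 0$ and $M \ge 3$, $\sum_{m=M+1}^{\infty}\frac{k+2}{\sqrt{(m-2)(k+m)}\,(k+2m-2)^2} \le \int_{M}^{\infty}\frac{(k+2)\,dm}{\sqrt{(m-2)(k+m)}\,(k+2m-2)^2} = \frac{k+2}{(k+2M-2)\left(2\left(\sqrt{(M-2)(k+M)}+M-1\right)+k\right)}$. -/

import Mathlib

open MeasureTheory

noncomputable def tsF (k m : ℝ) : ℝ :=
  2 * Real.sqrt ((m - 2) * (k + m)) / ((k + 2) * (k + 2 * m - 2)) - 1 / (k + 2)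

noncomputable def tsf (k m : ℝ) : ℝ :=
  (k + 2) / (Real.sqrt ((m - 2) * (k + m)) * (k + 2 * m - 2) ^ 2)

lemma tsF_hasDeriv {k m : ℝ} (hk : 0 ≤ k) (hm : 2 < m) :
    HasDerivAt (tsF k) (tsf k m) m := by
  have hgpos : 0 < (m - 2) * (k + m) := by nlinarith
  set s := Real.sqrt ((m - 2) * (k + m)) with hs
  have hspos : 0 < s := Real.sqrt_pos.2 hgpos
  have hs2 : s ^ 2 = (m - 2) * (k + m) := Real.sq_sqrt hgpos.le
  have hApos : 0 < k + 2 * m - 2 := by nlinarith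
  have hg : HasDerivAt (fun x : ℝ => (x - 2) * (k + x)) (1 * (k + m) + (m - 2) * 1) m :=
    ((hasDerivAt_id m).sub_const 2).mul ((hasDerivAt_id m).const_add k)
  have hsd : HasDerivAt (fun x : ℝ => Real.sqrt ((x - 2) * (k + x)))
      (1 / (2 * s) * (1 * (k + m) + (m - 2) * 1)) m :=
    (Real.hasDerivAt_sqrt hgpos.ne').comp m hg
  have hd : HasDerivAt (fun x : ℝ => (k + 2) * (k + 2 * x - 2)) ((k + 2) * 2) m := by
    simpa using (((hasDerivAt_id m).const_mul 2).const_add k |>.sub_const 2).const_mul (k + 2)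
  have hden : (k + 2) * (k + 2 * m - 2) ≠ 0 := by positivity
  have H := ((hsd.const_mul 2).div hd hden).sub_const (1 / (k + 2))
  have key : (2 * (1 / (2 * s) * (1 * (k + m) + (m - 2) * 1)) * ((k + 2) * (k + 2 * m - 2)) -
      2 * s * ((k + 2) * 2)) / ((k + 2) * (k + 2 * m - 2)) ^ 2 = tsf k m := by
    rw [tsf, ← hs]
    clear_value s
    clear hs hsd H
    rw [div_eq_div_iff (by positivity) (by positivity)]
    field_simp
    linear_combination (-4 : ℝ) * hs2
  rw [← key]
  exact H

lemma tsf_nonneg {k : ℝ} (hk : 0 ≤ k) (m : ℝ) : 0 ≤ tsf k m := by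
  rw [tsf]
  apply div_nonneg (by linarith)
  positivity

lemma two_s_le {k m : ℝ} (hk : 0 ≤ k) (hm : 3 ≤ m) :
    2 * Real.sqrt ((m - 2) * (k + m)) ≤ k + 2 * m - 2 := by
  have hgpos : 0 < (m - 2) * (k + m) := by nlinarith
  have hsnn : 0 ≤ Real.sqrt ((m - 2) * (k + m)) := Real.sqrt_nonneg _
  have hs2 : Real.sqrt ((m - 2) * (k + m)) ^ 2 = (m - 2) * (k + m) := Real.sq_sqrt hgpos.le
  nlinarith [sq_nonneg (k + 2), sq_nonneg (2 * Real.sqrt ((m - 2) * (k + m)) - (k + 2 * m - 2))]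

lemma tsF_mul {k m : ℝ} (hk : 0 ≤ k) (hm : 3 ≤ m) :
    tsF k m * ((k + 2) * (k + 2 * m - 2)) = 2 * Real.sqrt ((m - 2) * (k + m)) - (k + 2 * m - 2) := by
  have hApos : 0 < k + 2 * m - 2 := by nlinarith
  rw [tsF]
  field_simp

lemma tsF_nonpos {k m : ℝ} (hk : 0 ≤ k) (hm : 3 ≤ m) : tsF k m ≤ 0 := by
  have h2s := two_s_le hk hm
  have hsnn : 0 ≤ Real.sqrt ((m - 2) * (k + m)) := Real.sqrt_nonneg _
  have hApos : 0 < k + 2 * m - 2 := by nlinarith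
  rw [tsF, sub_nonpos, div_le_div_iff₀ (by positivity) (by positivity)]
  nlinarith

lemma tsF_lb {k m : ℝ} (hk : 0 ≤ k) (hm : 3 ≤ m) :
    -((k + 2) / (k + 2 * m - 2) ^ 2) ≤ tsF k m := by
  have h2s := two_s_le hk hm
  have hgpos : 0 < (m - 2) * (k + m) := by nlinarith
  set s := Real.sqrt ((m - 2) * (k + m)) with hs
  have hsnn : 0 ≤ s := Real.sqrt_nonneg _
  have hs2 : s ^ 2 = (m - 2) * (k + m) := Real.sq_sqrt hgpos.le
  have hApos : 0 < k + 2 * m - 2 := by nlinarith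
  have hDpos : 0 < (k + 2) * (k + 2 * m - 2) ^ 2 := by positivity
  rw [← mul_le_mul_iff_of_pos_right hDpos]
  have h1 : tsF k m * ((k + 2) * (k + 2 * m - 2) ^ 2) = (2 * s - (k + 2 * m - 2)) * (k + 2 * m - 2) := by
    have := tsF_mul hk hm
    rw [← hs] at this
    calc tsF k m * ((k + 2) * (k + 2 * m - 2) ^ 2)
        = tsF k m * ((k + 2) * (k + 2 * m - 2)) * (k + 2 * m - 2) := by ring
      _ = (2 * s - (k + 2 * m - 2)) * (k + 2 * m - 2) := by rw [this]
  have h2 : -((k + 2) / (k + 2 * m - 2) ^ 2) * ((k + 2) * (k + 2 * m - 2) ^ 2) = -(k + 2) ^ 2 := by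
    field_simp
  rw [h1, h2]
  nlinarith

lemma tsF_tendsto {k : ℝ} (hk : 0 ≤ k) : Filter.Tendsto (tsF k) Filter.atTop (nhds 0) := by
  have hA : Filter.Tendsto (fun m : ℝ => k + 2 * m - 2) Filter.atTop Filter.atTop := by
    apply Filter.tendsto_atTop_add_const_right
    apply Filter.tendsto_atTop_add_const_left
    exact Filter.Tendsto.const_mul_atTop two_pos Filter.tendsto_id
  have hA2 : Filter.Tendsto (fun m : ℝ => (k + 2 * m - 2) ^ 2) Filter.atTop Filter.atTop := by
    refine (hA.atTop_mul_atTop₀ hA).congr fun m => ?_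
    ring
  have h0 : Filter.Tendsto (fun m : ℝ => -((k + 2) / (k + 2 * m - 2) ^ 2))
      Filter.atTop (nhds 0) := by
    rw [← neg_zero]
    exact (Filter.Tendsto.div_atTop tendsto_const_nhds hA2).neg
  refine tendsto_of_tendsto_of_tendsto_of_le_of_le' h0 tendsto_const_nhds ?_ ?_
  · filter_upwards [Filter.eventually_ge_atTop (3 : ℝ)] with m hm using tsF_lb hk hm
  · filter_upwards [Filter.eventually_ge_atTop (3 : ℝ)] with m hm using tsF_nonpos hk hm

lemma tsf_anti {k : ℝ} (hk : 0 ≤ k) : AntitoneOn (tsf k) (Set.Ici 3) := by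
  intro a ha b hb hab
  simp only [Set.mem_Ici] at ha hb
  rw [tsf, tsf]
  have hga : 0 < (a - 2) * (k + a) := by nlinarith
  have hsa : 0 < Real.sqrt ((a - 2) * (k + a)) := Real.sqrt_pos.2 hga
  have hAa : 0 < k + 2 * a - 2 := by nlinarith
  gcongr
  linarith

/-- tail sum bounded by an integral with closed form. -/
theorem tail_sum_le_integral (k M : ℕ) (hM : 3 ≤ M) :
    (∑' i : ℕ, ((k : ℝ) + 2) /
        (Real.sqrt ((((M : ℝ) + 1 + (i : ℝ)) - 2) * ((k : ℝ) + ((M : ℝ) + 1 + (i : ℝ)))) *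
          ((k : ℝ) + 2 * ((M : ℝ) + 1 + (i : ℝ)) - 2) ^ 2)
      ≤ ∫ m in Set.Ioi (M : ℝ),
          ((k : ℝ) + 2) / (Real.sqrt ((m - 2) * ((k : ℝ) + m)) * ((k : ℝ) + 2 * m - 2) ^ 2)) ∧
    (∫ m in Set.Ioi (M : ℝ),
        ((k : ℝ) + 2) / (Real.sqrt ((m - 2) * ((k : ℝ) + m)) * ((k : ℝ) + 2 * m - 2) ^ 2)
      = ((k : ℝ) + 2) / (((k : ℝ) + 2 * (M : ℝ) - 2) *
          (2 * (Real.sqrt (((M : ℝ) - 2) * ((k : ℝ) + (M : ℝ))) + (M : ℝ) - 1) + (k : ℝ)))) := by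
  have hk : (0 : ℝ) ≤ (k : ℝ) := Nat.cast_nonneg k
  have hM3 : (3 : ℝ) ≤ (M : ℝ) := by exact_mod_cast hM
  have hcont : ContinuousWithinAt (tsF (k : ℝ)) (Set.Ici (M : ℝ)) (M : ℝ) :=
    (tsF_hasDeriv hk (by linarith)).continuousAt.continuousWithinAt
  have hderiv : ∀ x ∈ Set.Ioi (M : ℝ), HasDerivAt (tsF (k : ℝ)) (tsf (k : ℝ) x) x :=
    fun x hx => tsF_hasDeriv hk (by have := hx.out; linarith)
  have hpos : ∀ x ∈ Set.Ioi (M : ℝ), 0 ≤ tsf (k : ℝ) x := fun x _ => tsf_nonneg hk x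
  have htend := tsF_tendsto (k := (k : ℝ)) hk
  have hint : IntegrableOn (tsf (k : ℝ)) (Set.Ioi (M : ℝ)) :=
    integrableOn_Ioi_deriv_of_nonneg hcont hderiv hpos htend
  have hval : ∫ x in Set.Ioi (M : ℝ), tsf (k : ℝ) x = 0 - tsF (k : ℝ) (M : ℝ) :=
    integral_Ioi_of_hasDerivAt_of_nonneg hcont hderiv hpos htend
  constructor
  · -- sum part
    show ∑' i : ℕ, tsf (k : ℝ) ((M : ℝ) + 1 + (i : ℝ)) ≤ ∫ m in Set.Ioi (M : ℝ), tsf (k : ℝ) m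
    apply Real.tsum_le_of_sum_range_le (fun i => tsf_nonneg hk _)
    intro n
    have hmono : AntitoneOn (tsf (k : ℝ)) (Set.Icc (M : ℝ) ((M : ℝ) + n)) :=
      (tsf_anti hk).mono (fun x hx => le_trans hM3 hx.1)
    have h1 := hmono.sum_le_integral
    have h2 : ∑ i ∈ Finset.range n, tsf (k : ℝ) ((M : ℝ) + 1 + (i : ℝ)) =
        ∑ i ∈ Finset.range n, tsf (k : ℝ) ((M : ℝ) + ((i : ℕ) + 1 : ℕ)) := by
      refine Finset.sum_congr rfl fun i _ => ?_
      congr 1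
      push_cast
      ring
    rw [h2]
    refine h1.trans ?_
    rw [intervalIntegral.integral_of_le (by linarith [Nat.cast_nonneg (α := ℝ) n])]
    exact setIntegral_mono_set hint
      ((ae_restrict_iff' measurableSet_Ioi).2 (Filter.Eventually.of_forall hpos))
      (Filter.Eventually.of_forall Set.Ioc_subset_Ioi_self)
  · -- closed form
    show ∫ m in Set.Ioi (M : ℝ), tsf (k : ℝ) m = _
    rw [hval, zero_sub]
    have hgpos : 0 < ((M : ℝ) - 2) * ((k : ℝ) + (M : ℝ)) := by nlinarith
    set s := Real.sqrt (((M : ℝ) - 2) * ((k : ℝ) + (M : ℝ))) with hs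
    have hsnn : 0 ≤ s := Real.sqrt_nonneg _
    have hs2 : s ^ 2 = ((M : ℝ) - 2) * ((k : ℝ) + (M : ℝ)) := Real.sq_sqrt hgpos.le
    have hApos : 0 < (k : ℝ) + 2 * (M : ℝ) - 2 := by nlinarith
    have hBpos : 0 < 2 * (s + (M : ℝ) - 1) + (k : ℝ) := by nlinarith
    have hmul := tsF_mul (k := (k : ℝ)) (m := (M : ℝ)) hk hM3
    rw [← hs] at hmul
    have hiden : (((k : ℝ) + 2 * (M : ℝ) - 2) - 2 * s) * (2 * (s + (M : ℝ) - 1) + (k : ℝ))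
        = ((k : ℝ) + 2) ^ 2 := by
      linear_combination (-4 : ℝ) * hs2
    have hne : ((k : ℝ) + 2) * ((k : ℝ) + 2 * (M : ℝ) - 2) ≠ 0 := by positivity
    have hFval : tsF (k : ℝ) (M : ℝ) =
        (2 * s - ((k : ℝ) + 2 * (M : ℝ) - 2)) / (((k : ℝ) + 2) * ((k : ℝ) + 2 * (M : ℝ) - 2)) := by
      rw [eq_div_iff hne]
      exact hmul
    rw [hFval, ← neg_div, div_eq_div_iff (by positivity) (by positivity)]
    linear_combination (((k : ℝ) + 2 * (M : ℝ) - 2)) * hiden
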